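/- For 0 < b < 1, the cubic f(w) = 22w^3 - 23(1-b)w^2 + (5b^2-16b+5)w + b(1-b) has exactly one real root in each of (-b, 0), (0, (1-b)/2), and ((1-b)/2, 1); consequently C_{-b} has four real extraneous fixed points ±b₁, ±b₂ with 0 < b₂ < √((1-b)/2) < b₁ < 1 and two purely imaginary extraneous fixed points ±ib₃ with 0 < b₃ < √b. -/
import Mathlib

open Polynomial in
private lemma cubic_four {A B D x1 x2 x3 x4 : ℝ}
    (h1 : 22 * x1 ^ 3 + A * x1 ^ 2 + B * x1 + D = 0)
    (h2 : 22 * x2 ^ 3 + A * x2 ^ 2 + B * x2 + D = 0)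
    (h3 : 22 * x3 ^ 3 + A * x3 ^ 2 + B * x3 + D = 0)
    (h4 : 22 * x4 ^ 3 + A * x4 ^ 2 + B * x4 + D = 0)
    (d12 : x1 ≠ x2) (d13 : x1 ≠ x3) (d14 : x1 ≠ x4)
    (d23 : x2 ≠ x3) (d24 : x2 ≠ x4) (d34 : x3 ≠ x4) : False := by
  set p : ℝ[X] := C 22 * X ^ 3 + C A * X ^ 2 + C B * X + C D with hp
  have hdeg : p.natDegree = 3 := by unfold p; compute_degree!
  have hp0 : p ≠ 0 := fun h => by simp [h] at hdeg
  have hroot : ∀ x : ℝ, 22 * x ^ 3 + A * x ^ 2 + B * x + D = 0 → x ∈ p.roots := by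
    intro x hx
    rw [mem_roots hp0]
    simp only [IsRoot, p, eval_add, eval_mul, eval_pow, eval_C, eval_X]
    linarith
  have hsub : ({x1, x2, x3, x4} : Finset ℝ) ⊆ p.roots.toFinset := by
    intro x hx
    simp only [Finset.mem_insert, Finset.mem_singleton] at hx
    rw [Multiset.mem_toFinset]
    rcases hx with rfl | rfl | rfl | rfl
    · exact hroot _ h1
    · exact hroot _ h2
    · exact hroot _ h3
    · exact hroot _ h4
  have hcard : ({x1, x2, x3, x4} : Finset ℝ).card = 4 := by
    rw [Finset.card_insert_of_notMem (by simp [d12, d13, d14]),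
        Finset.card_insert_of_notMem (by simp [d23, d24]),
        Finset.card_insert_of_notMem (by simp [d34]), Finset.card_singleton]
  have hle := Finset.card_le_card hsub
  have h2' := Multiset.toFinset_card_le p.roots
  have h3' := Polynomial.card_roots' p
  omega

theorem stmt18 (b : ℝ) (hb0 : 0 < b) (hb1 : b < 1) :
    (∃! w : ℝ, w ∈ Set.Ioo (-b) 0 ∧
      22 * w ^ 3 - 23 * (1 - b) * w ^ 2 + (5 * b ^ 2 - 16 * b + 5) * w + b * (1 - b) = 0) ∧
    (∃! w : ℝ, w ∈ Set.Ioo 0 ((1 - b) / 2) ∧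
      22 * w ^ 3 - 23 * (1 - b) * w ^ 2 + (5 * b ^ 2 - 16 * b + 5) * w + b * (1 - b) = 0) ∧
    (∃! w : ℝ, w ∈ Set.Ioo ((1 - b) / 2) 1 ∧
      22 * w ^ 3 - 23 * (1 - b) * w ^ 2 + (5 * b ^ 2 - 16 * b + 5) * w + b * (1 - b) = 0) ∧
    (∃ b1 b2 b3 : ℝ,
      0 < b2 ∧ b2 < Real.sqrt ((1 - b) / 2) ∧ Real.sqrt ((1 - b) / 2) < b1 ∧ b1 < 1 ∧
      0 < b3 ∧ b3 < Real.sqrt b ∧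
      ∀ z : ℂ,
        (22 * z ^ 6 - 23 * (1 - (b : ℂ)) * z ^ 4
            + (5 * (b : ℂ) ^ 2 - 16 * (b : ℂ) + 5) * z ^ 2 + (b : ℂ) * (1 - (b : ℂ)) = 0
          ↔ (z = (b1 : ℂ) ∨ z = -(b1 : ℂ) ∨ z = (b2 : ℂ) ∨ z = -(b2 : ℂ)
              ∨ z = Complex.I * (b3 : ℂ) ∨ z = -(Complex.I * (b3 : ℂ))))) := by
  set f : ℝ → ℝ := fun w =>
    22 * w ^ 3 - 23 * (1 - b) * w ^ 2 + (5 * b ^ 2 - 16 * b + 5) * w + b * (1 - b) with hfdef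
  have hcont : Continuous f := by unfold f; continuity
  have hfa : f (-b) < 0 := by
    have h : f (-b) = -4 * b * (1 + b) ^ 2 := by unfold f; ring
    rw [h]; nlinarith [mul_pos hb0 (show (0:ℝ) < (1+b)^2 by positivity)]
  have hf0 : 0 < f 0 := by
    have h : f 0 = b * (1 - b) := by unfold f; ring
    rw [h]; nlinarith
  have hfm : f ((1-b)/2) < 0 := by
    have h : f ((1-b)/2) = -(1-b) * (1+b)^2 / 2 := by unfold f; ring
    rw [h]
    nlinarith [mul_pos (show (0:ℝ) < 1-b by linarith) (show (0:ℝ) < (1+b)^2 by positivity)]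
  have hf1 : 0 < f 1 := by
    have h : f 1 = 4 * (1 + b) ^ 2 := by unfold f; ring
    rw [h]; positivity
  obtain ⟨w1, hw1, hfw1⟩ := intermediate_value_Ioo (by linarith : -b ≤ (0:ℝ))
    hcont.continuousOn (show (0:ℝ) ∈ Set.Ioo (f (-b)) (f 0) from ⟨hfa, hf0⟩)
  obtain ⟨w2, hw2, hfw2⟩ := intermediate_value_Ioo' (by linarith : (0:ℝ) ≤ (1-b)/2)
    hcont.continuousOn (show (0:ℝ) ∈ Set.Ioo (f ((1-b)/2)) (f 0) from ⟨hfm, hf0⟩)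
  obtain ⟨w3, hw3, hfw3⟩ := intermediate_value_Ioo (by linarith : (1-b)/2 ≤ (1:ℝ))
    hcont.continuousOn (show (0:ℝ) ∈ Set.Ioo (f ((1-b)/2)) (f 1) from ⟨hfm, hf1⟩)
  -- basic positions
  have hw1l : -b < w1 := hw1.1
  have hw1r : w1 < 0 := hw1.2
  have hw2l : 0 < w2 := hw2.1
  have hw2r : w2 < (1-b)/2 := hw2.2
  have hw3l : (1-b)/2 < w3 := hw3.1
  have hw3r : w3 < 1 := hw3.2
  have h12 : w1 < w2 := by linarith
  have h23 : w2 < w3 := by linarith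
  have h1 : f w1 = 0 := hfw1
  have h2 : f w2 = 0 := hfw2
  have h3 : f w3 = 0 := hfw3
  have hfform : ∀ x : ℝ, f x = 0 →
      22 * x ^ 3 + (-(23 * (1 - b))) * x ^ 2 + (5 * b ^ 2 - 16 * b + 5) * x + b * (1 - b) = 0 := by
    intro x hx; unfold f at hx; linarith [hx]
  -- uniqueness machinery
  have uniq : ∀ y : ℝ, f y = 0 → (y < 0 → y = w1) ∧ (0 < y → y < (1-b)/2 → y = w2)
      ∧ ((1-b)/2 < y → y = w3) := by
    intro y hy
    refine ⟨fun hy0 => ?_, fun hy0 hy1 => ?_, fun hy0 => ?_⟩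
    · by_contra hne
      exact cubic_four (hfform _ hy) (hfform _ h1) (hfform _ h2) (hfform _ h3)
        hne (by linarith) (by linarith) (by linarith) (by linarith) (by linarith)
    · by_contra hne
      exact cubic_four (hfform _ hy) (hfform _ h1) (hfform _ h2) (hfform _ h3)
        (by linarith) hne (by linarith) (by linarith) (by linarith) (by linarith)
    · by_contra hne
      exact cubic_four (hfform _ hy) (hfform _ h1) (hfform _ h2) (hfform _ h3)
        (by linarith) (by linarith) hne (by linarith) (by linarith) (by linarith)
  refine ⟨⟨w1, ⟨hw1, h1⟩, fun y hy => (uniq y hy.2).1 hy.1.2⟩,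
    ⟨w2, ⟨hw2, h2⟩, fun y hy => (uniq y hy.2).2.1 hy.1.1 hy.1.2⟩,
    ⟨w3, ⟨hw3, h3⟩, fun y hy => (uniq y hy.2).2.2 hy.1.1⟩, ?_⟩
  -- Vieta relations
  have d12 : w1 - w2 ≠ 0 := sub_ne_zero.mpr (ne_of_lt h12)
  have d13 : w1 - w3 ≠ 0 := sub_ne_zero.mpr (ne_of_lt (by linarith))
  have d23 : w2 - w3 ≠ 0 := sub_ne_zero.mpr (ne_of_lt h23)
  have h1' : 22 * w1 ^ 3 - 23 * (1 - b) * w1 ^ 2 + (5 * b ^ 2 - 16 * b + 5) * w1 + b * (1 - b) = 0 := h1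
  have h2' : 22 * w2 ^ 3 - 23 * (1 - b) * w2 ^ 2 + (5 * b ^ 2 - 16 * b + 5) * w2 + b * (1 - b) = 0 := h2
  have h3' : 22 * w3 ^ 3 - 23 * (1 - b) * w3 ^ 2 + (5 * b ^ 2 - 16 * b + 5) * w3 + b * (1 - b) = 0 := h3
  have B12 : 22 * (w1^2 + w1*w2 + w2^2) - 23*(1-b)*(w1+w2) + (5*b^2 - 16*b + 5) = 0 := by
    have key : (w1 - w2) * (22 * (w1^2 + w1*w2 + w2^2) - 23*(1-b)*(w1+w2) + (5*b^2 - 16*b + 5)) = 0 := by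
      linear_combination h1' - h2'
    exact (mul_eq_zero.mp key).resolve_left d12
  have B13 : 22 * (w1^2 + w1*w3 + w3^2) - 23*(1-b)*(w1+w3) + (5*b^2 - 16*b + 5) = 0 := by
    have key : (w1 - w3) * (22 * (w1^2 + w1*w3 + w3^2) - 23*(1-b)*(w1+w3) + (5*b^2 - 16*b + 5)) = 0 := by
      linear_combination h1' - h3'
    exact (mul_eq_zero.mp key).resolve_left d13
  have e1 : 22 * (w1 + w2 + w3) = 23 * (1 - b) := by
    have key : (w2 - w3) * (22 * (w1 + w2 + w3) - 23 * (1 - b)) = 0 := by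
      linear_combination B12 - B13
    have := (mul_eq_zero.mp key).resolve_left d23
    linarith
  have e2 : 22 * (w1*w2 + w1*w3 + w2*w3) = 5*b^2 - 16*b + 5 := by
    linear_combination (w1 + w2) * e1 - B12
  have e3 : 22 * (w1*w2*w3) = -(b*(1-b)) := by
    linear_combination h1' - w1^2 * e1 + w1 * e2
  -- define b1 b2 b3
  have hw2pos : (0:ℝ) ≤ w2 := le_of_lt hw2l
  have hw3pos : (0:ℝ) ≤ w3 := by linarith
  have hnw1pos : (0:ℝ) ≤ -w1 := by linarith
  refine ⟨Real.sqrt w3, Real.sqrt w2, Real.sqrt (-w1),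
    Real.sqrt_pos.mpr hw2l, Real.sqrt_lt_sqrt hw2pos hw2r,
    Real.sqrt_lt_sqrt (by linarith) hw3l, ?_, Real.sqrt_pos.mpr (by linarith), 
    Real.sqrt_lt_sqrt hnw1pos (by linarith), ?_⟩
  · rw [show (1:ℝ) = Real.sqrt 1 by rw [Real.sqrt_one]]
    exact Real.sqrt_lt_sqrt hw3pos hw3r
  -- complex part
  have hb1sq : (Real.sqrt w3 : ℂ)^2 = (w3 : ℂ) := by
    have := Real.sq_sqrt hw3pos; exact_mod_cast this
  have hb2sq : (Real.sqrt w2 : ℂ)^2 = (w2 : ℂ) := by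
    have := Real.sq_sqrt hw2pos; exact_mod_cast this
  have hb3sq : (Complex.I * (Real.sqrt (-w1) : ℂ))^2 = (w1 : ℂ) := by
    have h := Real.sq_sqrt hnw1pos
    have h' : (Real.sqrt (-w1) : ℂ)^2 = -(w1 : ℂ) := by exact_mod_cast h
    rw [mul_pow, Complex.I_sq, h']; ring
  have E1 : (22:ℂ) * ((w1:ℂ) + w2 + w3) = 23 * (1 - (b:ℂ)) := by exact_mod_cast e1
  have E2 : (22:ℂ) * ((w1:ℂ)*w2 + (w1:ℂ)*w3 + (w2:ℂ)*w3) = 5*(b:ℂ)^2 - 16*b + 5 := by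
    exact_mod_cast e2
  have E3 : (22:ℂ) * ((w1:ℂ)*w2*w3) = -((b:ℂ)*(1-(b:ℂ))) := by exact_mod_cast e3
  have fact : ∀ u : ℂ, 22 * u ^ 3 - 23 * (1 - (b:ℂ)) * u ^ 2
      + (5*(b:ℂ)^2 - 16*(b:ℂ) + 5) * u + (b:ℂ) * (1 - (b:ℂ))
      = 22 * (u - (w1:ℂ)) * (u - (w2:ℂ)) * (u - (w3:ℂ)) := by
    intro u
    linear_combination u^2 * E1 - u * E2 + E3
  intro z
  constructor
  · intro h
    have key : (z^2 - (w1:ℂ)) * (z^2 - (w2:ℂ)) * (z^2 - (w3:ℂ)) = 0 := by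
      linear_combination (h - fact (z^2)) / 22
    rcases mul_eq_zero.mp key with key' | hc
    · rcases mul_eq_zero.mp key' with ha | hb
      · -- z^2 = w1 : imaginary case
        have : (z - Complex.I * (Real.sqrt (-w1) : ℂ)) * (z + Complex.I * (Real.sqrt (-w1) : ℂ)) = 0 := by
          linear_combination ha - hb3sq
        rcases mul_eq_zero.mp this with h' | h'
        · exact Or.inr (Or.inr (Or.inr (Or.inr (Or.inl (sub_eq_zero.mp h')))))
        · exact Or.inr (Or.inr (Or.inr (Or.inr (Or.inr (eq_neg_of_add_eq_zero_left h')))))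
      · -- z^2 = w2
        have : (z - (Real.sqrt w2 : ℂ)) * (z + (Real.sqrt w2 : ℂ)) = 0 := by
          linear_combination hb - hb2sq
        rcases mul_eq_zero.mp this with h' | h'
        · exact Or.inr (Or.inr (Or.inl (sub_eq_zero.mp h')))
        · exact Or.inr (Or.inr (Or.inr (Or.inl (eq_neg_of_add_eq_zero_left h'))))
    · -- z^2 = w3
      have : (z - (Real.sqrt w3 : ℂ)) * (z + (Real.sqrt w3 : ℂ)) = 0 := by
        linear_combination hc - hb1sq
      rcases mul_eq_zero.mp this with h' | h'
      · exact Or.inl (sub_eq_zero.mp h')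
      · exact Or.inr (Or.inl (eq_neg_of_add_eq_zero_left h'))
  · intro h
    have evalzero : z^2 = (w1:ℂ) ∨ z^2 = (w2:ℂ) ∨ z^2 = (w3:ℂ) →
        22 * z ^ 6 - 23 * (1 - (b : ℂ)) * z ^ 4
          + (5 * (b : ℂ) ^ 2 - 16 * (b : ℂ) + 5) * z ^ 2 + (b : ℂ) * (1 - (b : ℂ)) = 0 := by
      intro hz
      have hf := fact (z^2)
      rcases hz with h' | h' | h' <;>
        · rw [show 22 * z ^ 6 - 23 * (1 - (b : ℂ)) * z ^ 4
              + (5 * (b : ℂ) ^ 2 - 16 * (b : ℂ) + 5) * z ^ 2 + (b : ℂ) * (1 - (b : ℂ))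
            = 22 * (z^2 - (w1:ℂ)) * (z^2 - (w2:ℂ)) * (z^2 - (w3:ℂ)) by linear_combination hf, h']
          ring
    rcases h with rfl | rfl | rfl | rfl | rfl | rfl
    · exact evalzero (Or.inr (Or.inr hb1sq))
    · exact evalzero (Or.inr (Or.inr (by rw [neg_pow]; simpa using hb1sq)))
    · exact evalzero (Or.inr (Or.inl hb2sq))
    · exact evalzero (Or.inr (Or.inl (by rw [neg_pow]; simpa using hb2sq)))
    · exact evalzero (Or.inl hb3sq)
    · exact evalzero (Or.inl (by rw [neg_pow]; simpa using hb3sq))
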